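/- Let n ≥ 5 be odd. For every X ∈ Sym₀(C_n) (real symmetric n×n, zero diagonal, off-diagonal entry (i,j) nonzero iff i - j ≡ ±1 mod n) and every λ ∈ ℂ, the matrix obtained from X - λI by deleting rows 1 and 3 has rank n - 2; equivalently, (X, [e_1, e_3]) is controllable for all X ∈ Sym₀(C_n). -/

import Mathlib

open Matrix

private lemma rank_rows_full {m : ℕ} {K : Type*} [Fintype K] (M : Matrix (Fin m) K ℂ)
    (h : ∀ w : Fin m → ℂ, w ᵥ* M = 0 → w = 0) : M.rank = m := by
  have h1 : Function.Injective Mᵀ.mulVecLin := by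
    refine LinearMap.ker_eq_bot.mp (LinearMap.ker_eq_bot'.mpr ?_)
    intro w hw
    apply h
    rwa [Matrix.mulVecLin_apply, Matrix.mulVec_transpose] at hw
  have h2 : Mᵀ.rank = m := by
    rw [Matrix.rank, LinearMap.finrank_range_of_inj h1, Module.finrank_fin_fun]
  rw [← Matrix.rank_transpose]; exact h2

open Matrix

private lemma key_zero (n : ℕ) (hn : 5 ≤ n) (hodd : Odd n) (X : Matrix (Fin n) (Fin n) ℝ)
    (hedge : ∀ a b : Fin n, ((a.1 + 1) % n = b.1 ∨ (b.1 + 1) % n = a.1) → X a b ≠ 0)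
    (hnonedge : ∀ a b : Fin n, ¬((a.1 + 1) % n = b.1 ∨ (b.1 + 1) % n = a.1) → X a b = 0)
    (μ : ℂ) (v : Fin n → ℂ)
    (heq : ∀ i : Fin n, ∑ j, ((X.map Complex.ofReal - μ • 1) i j) * v j = 0)
    (h0 : v ⟨0, by omega⟩ = 0) (h2 : v ⟨2, by omega⟩ = 0) : v = 0 := by
  have hnpos : 0 < n := by omega
  set V : ℕ → ℂ := fun k => v ⟨k % n, Nat.mod_lt _ hnpos⟩ with hV
  have hVlt : ∀ (k : ℕ) (hk : k < n), V k = v ⟨k, hk⟩ := by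
    intro k hk
    simp only [hV]
    congr 1
    exact Fin.ext (Nat.mod_eq_of_lt hk)
  have Vper : ∀ k, V (k + n) = V k := by
    intro k; simp only [hV]; congr 1; exact Fin.ext (Nat.add_mod_right k n)
  have rec3 : ∀ k : ℕ, ∃ a b : ℂ, a ≠ 0 ∧ b ≠ 0 ∧
      a * V (k + (n - 1)) + b * V (k + 1) = μ * V k := by
    intro k
    set i : Fin n := ⟨k % n, Nat.mod_lt _ hnpos⟩ with hi
    set p : Fin n := ⟨(k + (n - 1)) % n, Nat.mod_lt _ hnpos⟩ with hp
    set s : Fin n := ⟨(k + 1) % n, Nat.mod_lt _ hnpos⟩ with hs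
    have hpi : (p.1 + 1) % n = i.1 := by
      show ((k + (n - 1)) % n + 1) % n = k % n
      rw [Nat.mod_add_mod, show k + (n - 1) + 1 = k + n by omega, Nat.add_mod_right]
    have hisucc : (i.1 + 1) % n = s.1 := by
      show (k % n + 1) % n = (k + 1) % n
      rw [Nat.mod_add_mod]
    have hps : p ≠ s := by
      intro hcon
      have hcon' : (k + (n - 1)) % n = (k + 1) % n := by
        have := congrArg Fin.val hcon; exact this
      have hdvd : n ∣ (k + (n - 1)) - (k + 1) :=
        (Nat.modEq_iff_dvd' (by omega)).mp hcon'.symm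
      have := Nat.le_of_dvd (by omega) hdvd
      omega
    have hXp : X i p ≠ 0 := hedge i p (Or.inr hpi)
    have hXs : X i s ≠ 0 := hedge i s (Or.inl hisucc)
    have hsupp : ∀ j : Fin n, j ∉ ({p, s} : Finset (Fin n)) → X i j = 0 := by
      intro j hj
      simp only [Finset.mem_insert, Finset.mem_singleton] at hj
      push_neg at hj
      apply hnonedge
      rintro (h | h)
      · exact hj.2 (Fin.ext (hisucc ▸ h).symm)
      · apply hj.1
        apply Fin.ext
        have h2' : (j.1 + 1) % n = k % n := h
        show j.1 = (k + (n - 1)) % n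
        have : (k + (n - 1)) % n = j.1 := by
          conv_lhs => rw [← Nat.mod_add_mod, ← h2', Nat.mod_add_mod]
          rw [show j.1 + 1 + (n - 1) = j.1 + n by omega, Nat.add_mod_right,
            Nat.mod_eq_of_lt j.2]
        omega
    have hAent : ∀ a b : Fin n, (X.map Complex.ofReal - μ • 1) a b
        = (X a b : ℂ) - if a = b then μ else 0 := by
      intro a b
      simp only [Matrix.sub_apply, Matrix.map_apply, Matrix.smul_apply, Matrix.one_apply,
        smul_eq_mul, mul_ite, mul_one, mul_zero]
    have hsum := heq i
    have e1 : (∑ j, (X i j : ℂ) * v j) = μ * v i := by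
      have hrw : ∑ j, ((X.map Complex.ofReal - μ • 1) i j) * v j
          = (∑ j, (X i j : ℂ) * v j) - μ * v i := by
        simp only [hAent, sub_mul, Finset.sum_sub_distrib]
        congr 1
        simp [ite_mul]
      rw [hrw] at hsum
      exact sub_eq_zero.mp hsum
    have e2 : ∑ j, (X i j : ℂ) * v j = (X i p : ℂ) * v p + (X i s : ℂ) * v s := by
      rw [← Finset.sum_subset (Finset.subset_univ ({p, s} : Finset (Fin n)))
        (fun j _ hj => by simp [hsupp j hj]), Finset.sum_pair hps]
    refine ⟨(X i p : ℂ), (X i s : ℂ), Complex.ofReal_ne_zero.mpr hXp,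
      Complex.ofReal_ne_zero.mpr hXs, ?_⟩
    show (X i p : ℂ) * v p + (X i s : ℂ) * v s = μ * v i
    rw [← e2]; exact e1
  -- base values
  have hV0 : V 0 = 0 := by rw [hVlt 0 (by omega)]; exact h0
  have hV2 : V 2 = 0 := by rw [hVlt 2 (by omega)]; exact h2
  rcases eq_or_ne μ 0 with hμ | hμ
  · -- μ = 0 : even-step chain covers everything since n is odd
    have heven : ∀ m : ℕ, V (2 * m) = 0 := by
      intro m
      induction m with
      | zero => simpa using hV0
      | succ m ih =>
        obtain ⟨a, b, ha, hb, h⟩ := rec3 (2 * m + 1)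
        rw [hμ, zero_mul, show 2 * m + 1 + (n - 1) = 2 * m + n by omega, Vper, ih,
          mul_zero, zero_add] at h
        have : V (2 * m + 1 + 1) = 0 := by
          rcases mul_eq_zero.mp h with h' | h'
          · exact absurd h' hb
          · exact h'
        rw [show 2 * (m + 1) = 2 * m + 1 + 1 by ring]
        exact this
    funext i
    rcases Nat.even_or_odd i.1 with he | ho
    · obtain ⟨m, hm⟩ := he
      have := heven m
      rw [show 2 * m = i.1 by omega, hVlt i.1 i.2] at this
      simpa using this
    · obtain ⟨m, hm⟩ := ho
      obtain ⟨t, ht⟩ := hodd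
      have h1 : 2 * (m + t + 1) = i.1 + n := by omega
      have := heven (m + t + 1)
      rw [h1, Vper, hVlt i.1 i.2] at this
      simpa using this
  · -- μ ≠ 0
    have hV1 : V 1 = 0 := by
      obtain ⟨a, b, ha, hb, h⟩ := rec3 1
      rw [show 1 + (n - 1) = 0 + n by omega, Vper, hV0, hV2, mul_zero, mul_zero,
        add_zero] at h
      rcases mul_eq_zero.mp h.symm with h' | h'
      · exact absurd h' hμ
      · exact h'
    have hV3 : V 3 = 0 := by
      obtain ⟨a, b, ha, hb, h⟩ := rec3 2
      rw [show 2 + (n - 1) = 1 + n by omega, Vper, hV1, hV2, mul_zero, mul_zero,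
        zero_add] at h
      rcases mul_eq_zero.mp h with h' | h'
      · exact absurd h' hb
      · exact h'
    have hall : ∀ k, k < n → V k = 0 := by
      intro k
      induction k using Nat.strong_induction_on with
      | _ k ih =>
        intro hk
        rcases Nat.lt_or_ge k 4 with hk4 | hk4
        · interval_cases k
          · exact hV0
          · exact hV1
          · exact hV2
          · exact hV3
        · obtain ⟨a, b, ha, hb, h⟩ := rec3 (k - 1)
          rw [show k - 1 + (n - 1) = (k - 2) + n by omega, Vper,
            ih (k - 2) (by omega) (by omega), ih (k - 1) (by omega) (by omega),
            mul_zero, mul_zero, zero_add, show k - 1 + 1 = k by omega] at h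
          rcases mul_eq_zero.mp h with h' | h'
          · exact absurd h' hb
          · exact h'
    funext i
    have := hall i.1 i.2
    rw [hVlt i.1 i.2] at this
    simpa using this



/-- For odd `n ≥ 5` and `X ∈ Sym₀(C_n)`, deleting rows 1 and 3 from `X - λI` always
leaves rank `n-2`; equivalently `(X, [e_1, e_3])` is controllable for all
`X ∈ Sym₀(C_n)`. Vertices `1,…,n` are represented by `Fin n`. -/
theorem stmt17 (n : ℕ) (hn : 5 ≤ n) (hodd : Odd n) (X : Matrix (Fin n) (Fin n) ℝ)
    (hsym : X.IsSymm)
    (hedge : ∀ a b : Fin n, ((a.1 + 1) % n = b.1 ∨ (b.1 + 1) % n = a.1) → X a b ≠ 0)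
    (hnonedge : ∀ a b : Fin n, ¬((a.1 + 1) % n = b.1 ∨ (b.1 + 1) % n = a.1) → X a b = 0) :
    (∀ μ : ℂ,
      (Matrix.of fun (r : Fin (n - 2)) (c : Fin n) =>
        (X.map Complex.ofReal - μ • 1)
          ⟨if r.1 = 0 then 1 else r.1 + 2, by have := r.2; split <;> omega⟩ c).rank
        = n - 2) ∧
    (∀ μ : ℂ,
      (Matrix.fromCols (X.map Complex.ofReal - μ • 1)
        (Matrix.of fun (r : Fin n) (c : Fin 2) =>
          if r.1 = (if c = 0 then 0 else 2) then (1 : ℂ) else 0)).rank = n) := by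
  have hsymA : ∀ (μ : ℂ) (i j : Fin n),
      (X.map Complex.ofReal - μ • 1) i j = (X.map Complex.ofReal - μ • 1) j i := by
    intro μ i j
    by_cases h : i = j
    · subst h; rfl
    · simp only [Matrix.sub_apply, Matrix.map_apply, Matrix.smul_apply, Matrix.one_apply,
        smul_eq_mul, if_neg h, if_neg (Ne.symm h), (hsym.apply i j).symm]
  constructor
  · -- rows 0 and 2 deleted
    intro μ
    apply rank_rows_full
    intro w hw
    set A := X.map Complex.ofReal - μ • 1 with hA
    set emb : Fin (n - 2) → Fin n :=
      fun r => ⟨if r.1 = 0 then 1 else r.1 + 2, by have := r.2; split <;> omega⟩ with hembdef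
    have hinj : Function.Injective emb := by
      intro a b hab
      have h := congrArg Fin.val hab
      simp only [hembdef] at h
      have h2a := a.2; have h2b := b.2
      apply Fin.ext
      split_ifs at h <;> omega
    set v : Fin n → ℂ := fun i =>
      if h1 : i.1 = 1 then w ⟨0, by omega⟩
      else if h3 : 3 ≤ i.1 then w ⟨i.1 - 2, by have := i.2; omega⟩ else 0 with hvdef
    have hvemb : ∀ r, v (emb r) = w r := by
      intro r
      by_cases h : r.1 = 0
      · simp only [hvdef, hembdef, h, if_pos rfl]
        norm_num
        congr 1
        exact (Fin.ext h.symm)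
      · have hr2 := r.2
        simp only [hvdef, hembdef, if_neg h]
        rw [dif_neg (by omega), dif_pos (by omega)]
        exact congrArg w (Fin.ext (by simp))
    have hv0 : v ⟨0, by omega⟩ = 0 := by simp [hvdef]
    have hv2 : v ⟨2, by omega⟩ = 0 := by simp [hvdef]
    have hiout : ∀ i : Fin n, i ∉ Finset.image emb Finset.univ → v i = 0 := by
      intro i hi
      by_contra hne
      apply hi
      rw [Finset.mem_image]
      have hcase : i.1 = 1 ∨ 3 ≤ i.1 := by
        by_contra hc
        push_neg at hc
        apply hne
        simp only [hvdef]
        rw [dif_neg hc.1, dif_neg (by omega)]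
      rcases hcase with h | h
      · exact ⟨⟨0, by omega⟩, Finset.mem_univ _, Fin.ext (by simp [hembdef, h.symm])⟩
      · refine ⟨⟨i.1 - 2, by have := i.2; omega⟩, Finset.mem_univ _, Fin.ext ?_⟩
        simp only [hembdef]
        rw [if_neg (by omega)]
        omega
    have hker : ∀ c : Fin n, ∑ i, v i * A i c = 0 := by
      intro c
      have hwc := congrFun hw c
      simp only [Matrix.vecMul, dotProduct, Matrix.of_apply, Pi.zero_apply] at hwc
      rw [← Finset.sum_subset (Finset.subset_univ (Finset.image emb Finset.univ))
        (fun i _ hi => by rw [hiout i hi, zero_mul]),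
        Finset.sum_image (fun a _ b _ h => hinj h)]
      rw [Finset.sum_congr rfl (fun r _ => by rw [hvemb r])]
      exact hwc
    have hveq : v = 0 := by
      apply key_zero n hn hodd X hedge hnonedge μ v ?_ hv0 hv2
      intro i
      rw [Finset.sum_congr rfl (fun j _ => by rw [hsymA μ i j, mul_comm])]
      exact hker i
    funext r
    rw [← hvemb r, hveq]
    rfl
  · -- controllability rank condition
    intro μ
    apply rank_rows_full
    intro w hw
    set A := X.map Complex.ofReal - μ • 1 with hA
    rw [Matrix.vecMul_fromCols] at hw
    have hwA : w ᵥ* A = 0 := by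
      funext j; exact congrFun hw (Sum.inl j)
    have hcol : ∀ c : Fin 2, ∑ r : Fin n, w r *
        (if r.1 = (if c = 0 then 0 else 2) then (1 : ℂ) else 0) = 0 := by
      intro c
      have := congrFun hw (Sum.inr c)
      simpa [Matrix.vecMul, dotProduct] using this
    have hw0 : w ⟨0, by omega⟩ = 0 := by
      have h := hcol 0
      rw [Finset.sum_eq_single (⟨0, by omega⟩ : Fin n)] at h
      · simpa using h
      · intro b _ hb
        have : b.1 ≠ 0 := fun hh => hb (Fin.ext hh)
        simp [this]
      · simp
    have hw2 : w ⟨2, by omega⟩ = 0 := by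
      have h := hcol 1
      rw [Finset.sum_eq_single (⟨2, by omega⟩ : Fin n)] at h
      · simpa using h
      · intro b _ hb
        have : b.1 ≠ 2 := fun hh => hb (Fin.ext hh)
        simp [this]
      · simp
    apply key_zero n hn hodd X hedge hnonedge μ w ?_ hw0 hw2
    intro i
    rw [Finset.sum_congr rfl (fun j _ => by rw [hsymA μ i j, mul_comm])]
    have := congrFun hwA i
    simpa [Matrix.vecMul, dotProduct, hA] using this
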